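/- For every field F there exists a uniform Kronecker quotient over F. Explicitly, for each nonzero C ∈ F^{n×n} pick an index f(C) = (i,j) with C_{i,j} ≠ 0, and define the linear map X ↦ X⊘C by (A⊗B)⊘C := A · (B_{f(C)} / C_{f(C)}) on decomposable elements and linear extension; this is a well-defined uniform Kronecker quotient. -/

import Mathlib

open Matrix Kronecker

theorem stmt2 (F : Type*) [Field F] :
    ∃ Q : ∀ (k l : Type) [Fintype k] [DecidableEq k] [Fintype l] [DecidableEq l],
      Matrix (k × l) (k × l) F → Matrix l l F → Matrix k k F,
      (∀ (k l : Type) [Fintype k] [DecidableEq k] [Fintype l] [DecidableEq l]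
        (A : Matrix k k F) (B : Matrix l l F), B ≠ 0 → Q k l (A ⊗ₖ B) B = A) ∧
      (∀ (k l : Type) [Fintype k] [DecidableEq k] [Fintype l] [DecidableEq l]
        (A B : Matrix (k × l) (k × l) F) (C : Matrix l l F),
        Q k l (A + B) C = Q k l A C + Q k l B C) ∧
      (∀ (k l : Type) [Fintype k] [DecidableEq k] [Fintype l] [DecidableEq l]
        (c : F) (A : Matrix (k × l) (k × l) F) (C : Matrix l l F),
        Q k l (c • A) C = c • Q k l A C) ∧
      (∀ (k p l : Type) [Fintype k] [DecidableEq k] [Fintype p] [DecidableEq p]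
        [Fintype l] [DecidableEq l]
        (A : Matrix k k F) (B : Matrix l l F) (C : Matrix (p × l) (p × l) F),
        Q (k × p) l (Matrix.reindex (Equiv.prodAssoc k p l).symm
          (Equiv.prodAssoc k p l).symm (A ⊗ₖ C)) B = A ⊗ₖ Q p l C B) := by
  classical
  refine ⟨fun k l _ _ _ _ X C =>
    if h : ∃ ij : l × l, C ij.1 ij.2 ≠ 0 then
      Matrix.of fun a b => X (a, h.choose.1) (b, h.choose.2) / C h.choose.1 h.choose.2
    else 0, ?_, ?_, ?_, ?_⟩
  · intro k l _ _ _ _ A B hB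
    have h : ∃ ij : l × l, B ij.1 ij.2 ≠ 0 := by
      by_contra h'
      push_neg at h'
      exact hB (by ext i j; simpa using h' (i, j))
    show (if h : ∃ ij : l × l, B ij.1 ij.2 ≠ 0 then _ else 0) = A
    rw [dif_pos h]
    ext a b
    simp only [Matrix.of_apply, Matrix.kroneckerMap_apply]
    rw [mul_div_assoc, div_self h.choose_spec, mul_one]
  · intro k l _ _ _ _ A B C
    show (if h : ∃ ij : l × l, C ij.1 ij.2 ≠ 0 then _ else (0 : Matrix k k F)) = (if h : ∃ ij : l × l, C ij.1 ij.2 ≠ 0 then _ else (0 : Matrix k k F)) + (if h : ∃ ij : l × l, C ij.1 ij.2 ≠ 0 then _ else (0 : Matrix k k F))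
    by_cases h : ∃ ij : l × l, C ij.1 ij.2 ≠ 0
    · rw [dif_pos h, dif_pos h, dif_pos h]
      ext a b
      simp [add_div]
    · rw [dif_neg h, dif_neg h, dif_neg h, add_zero]
  · intro k l _ _ _ _ c A C
    show (if h : ∃ ij : l × l, C ij.1 ij.2 ≠ 0 then _ else (0 : Matrix k k F)) = c • (if h : ∃ ij : l × l, C ij.1 ij.2 ≠ 0 then _ else (0 : Matrix k k F))
    by_cases h : ∃ ij : l × l, C ij.1 ij.2 ≠ 0
    · rw [dif_pos h, dif_pos h]
      ext a b
      simp [mul_div_assoc]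
    · rw [dif_neg h, dif_neg h, smul_zero]
  · intro k p l _ _ _ _ _ _ A B C
    show (if h : _ then _ else 0) = A ⊗ₖ (if h : _ then _ else 0)
    by_cases h : ∃ ij : l × l, B ij.1 ij.2 ≠ 0
    · rw [dif_pos h, dif_pos h]
      ext ⟨a₁, a₂⟩ ⟨b₁, b₂⟩
      simp [Matrix.kroneckerMap_apply, Equiv.prodAssoc, mul_div_assoc]
    · rw [dif_neg h, dif_neg h]
      ext ⟨a₁, a₂⟩ ⟨b₁, b₂⟩
      simp
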